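/- If Γ ⊢_{NWFC} A then Γ ⊢_{HWFC} A; that is, every formula derivable from Γ in the natural deduction system NWFC is derivable from Γ in the restricted Hilbert system WFC. -/

import Mathlib

/-- Formulas of subintuitionistic propositional logic. -/
inductive Fml : Type
  | atom : ℕ → Fml
  | bot  : Fml
  | and  : Fml → Fml → Fml
  | or   : Fml → Fml → Fml
  | imp  : Fml → Fml → Fml
deriving DecidableEq

/-- `A ↔ B` abbreviates `(A → B) ∧ (B → A)`. -/
def Fml.biimp (A B : Fml) : Fml := (A.imp B).and (B.imp A)

/-- The extra axiom schemes / rules among I, C, D, Ĉ, D̂, N, N₂. -/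
inductive ExtAx : Type
  | I | C | D | Chat | Dhat | N | N2
deriving DecidableEq

/-- Theorems of the Hilbert system WF extended with the schemes/rules in `E`
(derivations with no assumptions; all rules unrestricted here). -/
inductive HThm (E : Set ExtAx) : Fml → Prop
  | ax1 (A B : Fml)   : HThm E (A.imp (A.or B))
  | ax2 (A B : Fml)   : HThm E (B.imp (A.or B))
  | ax3 (A B : Fml)   : HThm E ((A.and B).imp A)
  | ax4 (A B : Fml)   : HThm E ((A.and B).imp B)
  | ax7 (A B C : Fml) : HThm E ((A.and (B.or C)).imp ((A.and B).or (A.and C)))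
  | ax8 (A : Fml)     : HThm E (A.imp A)
  | ax14 (A : Fml)    : HThm E (Fml.bot.imp A)
  | mp {A B : Fml}    : HThm E A → HThm E (A.imp B) → HThm E B
  | af {A : Fml} (B : Fml) : HThm E A → HThm E (B.imp A)
  | tr {A B C : Fml}  : HThm E (A.imp B) → HThm E (B.imp C) → HThm E (A.imp C)
  | rc {A B C : Fml}  : HThm E (A.imp B) → HThm E (A.imp C) → HThm E (A.imp (B.and C))
  | rd {A B C : Fml}  : HThm E (A.imp C) → HThm E (B.imp C) → HThm E ((A.or B).imp C)
  | conj {A B : Fml}  : HThm E A → HThm E B → HThm E (A.and B)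
  | re {A B C D : Fml} : HThm E (A.biimp B) → HThm E (C.biimp D) →
      HThm E ((A.imp C).biimp (B.imp D))
  | axI (A B C : Fml) : ExtAx.I ∈ E →
      HThm E (((A.imp B).and (B.imp C)).imp (A.imp C))
  | axC (A B C : Fml) : ExtAx.C ∈ E →
      HThm E (((A.imp B).and (A.imp C)).imp (A.imp (B.and C)))
  | axD (A B C : Fml) : ExtAx.D ∈ E →
      HThm E (((A.imp C).and (B.imp C)).imp ((A.or B).imp C))
  | axChat (A B C : Fml) : ExtAx.Chat ∈ E →
      HThm E ((A.imp (B.and C)).imp ((A.imp B).and (A.imp C)))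
  | axDhat (A B C : Fml) : ExtAx.Dhat ∈ E →
      HThm E (((A.or B).imp C).imp ((A.imp C).and (B.imp C)))
  | ruleN {A B C D : Fml} : ExtAx.N ∈ E →
      HThm E (A.imp (B.or C)) → HThm E (C.imp (A.or D)) →
      HThm E ((A.and D).imp B) → HThm E ((C.and B).imp D) →
      HThm E ((A.imp B).biimp (C.imp D))
  | ruleN2 {A B C D : Fml} : ExtAx.N2 ∈ E →
      HThm E (C.imp (A.or D)) → HThm E ((C.and B).imp D) →
      HThm E ((A.imp B).imp (C.imp D))

/-- Restricted derivability from assumptions in the Hilbert system WF + `E`: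
besides assumptions and theorems, only the conjunction rule is unrestricted, and
modus ponens may be used only when the major premise `A → B` is a theorem
(derived with no assumptions); all other rules are confined to theorems. -/
inductive HDer (E : Set ExtAx) (Γ : Set Fml) : Fml → Prop
  | hyp {A : Fml}  : A ∈ Γ → HDer E Γ A
  | thm {A : Fml}  : HThm E A → HDer E Γ A
  | conj {A B : Fml} : HDer E Γ A → HDer E Γ B → HDer E Γ (A.and B)
  | mp {A B : Fml} : HDer E Γ A → HThm E (A.imp B) → HDer E Γ B

/-- Tags for the optional implication-introduction rules of the natural
deduction systems. -/
inductive NRule : Type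
  | impI1 | impI2 | impN | impN2 | impChat | impDhat | impAnd | impOr | impTr
deriving DecidableEq

/-- Natural deduction derivations for the system with optional rules `R`.
`Deriv R Γ A` is a derivation of `A` all of whose open assumptions lie in `Γ`. -/
inductive Deriv (R : Set NRule) : Set Fml → Fml → Type
  | hyp (Γ : Set Fml) (A : Fml) : A ∈ Γ → Deriv R Γ A
  | andI {Γ : Set Fml} {A B : Fml} :
      Deriv R Γ A → Deriv R Γ B → Deriv R Γ (A.and B)
  | andE1 {Γ : Set Fml} {A B : Fml} :
      Deriv R Γ (A.and B) → Deriv R Γ A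
  | andE2 {Γ : Set Fml} {A B : Fml} :
      Deriv R Γ (A.and B) → Deriv R Γ B
  | orI1 {Γ : Set Fml} {A : Fml} (B : Fml) :
      Deriv R Γ A → Deriv R Γ (A.or B)
  | orI2 {Γ : Set Fml} (A : Fml) {B : Fml} :
      Deriv R Γ B → Deriv R Γ (A.or B)
  | orE {Γ : Set Fml} {A B C : Fml} :
      Deriv R Γ (A.or B) → Deriv R (insert A Γ) C → Deriv R (insert B Γ) C →
      Deriv R Γ C
  | botE {Γ : Set Fml} (A : Fml) :
      Deriv R Γ Fml.bot → Deriv R Γ A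
  | impI {Γ : Set Fml} {A B : Fml} :
      Deriv R {A} B → Deriv R Γ (A.imp B)
  | impE {Γ : Set Fml} {A B : Fml} :
      Deriv R Γ A → Deriv R (∅ : Set Fml) (A.imp B) → Deriv R Γ B
  | impI1 {Γ : Set Fml} {A B D : Fml} :
      NRule.impI1 ∈ R → Deriv R {B} D → Deriv R {D} B →
      Deriv R Γ ((A.imp B).imp (A.imp D))
  | impI2 {Γ : Set Fml} {A B D : Fml} :
      NRule.impI2 ∈ R → Deriv R {B} D → Deriv R {D} B →
      Deriv R Γ ((B.imp A).imp (D.imp A))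
  | impIN {Γ : Set Fml} {A B C D : Fml} :
      NRule.impN ∈ R →
      Deriv R {A} (C.or B) → Deriv R {D} B → Deriv R {C} (A.or D) → Deriv R {B} D →
      Deriv R Γ ((A.imp B).imp (C.imp D))
  | impIN2 {Γ : Set Fml} {A B C D : Fml} :
      NRule.impN2 ∈ R →
      Deriv R {C} (A.or D) → Deriv R {B} D →
      Deriv R Γ ((A.imp B).imp (C.imp D))
  | impIChat {Γ : Set Fml} {A B : Fml} (C : Fml) :
      NRule.impChat ∈ R → Deriv R {A} B →
      Deriv R Γ ((C.imp A).imp (C.imp B))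
  | impIDhat {Γ : Set Fml} {A B : Fml} (C : Fml) :
      NRule.impDhat ∈ R → Deriv R {A} B →
      Deriv R Γ ((B.imp C).imp (A.imp C))
  | impIAnd {Γ : Set Fml} {A B C : Fml} :
      NRule.impAnd ∈ R → Deriv R Γ (A.imp B) → Deriv R Γ (A.imp C) →
      Deriv R Γ (A.imp (B.and C))
  | impIOr {Γ : Set Fml} {A B C : Fml} :
      NRule.impOr ∈ R → Deriv R Γ (A.imp C) → Deriv R Γ (B.imp C) →
      Deriv R Γ ((A.or B).imp C)
  | impITr {Γ : Set Fml} {A B C : Fml} :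
      NRule.impTr ∈ R → Deriv R Γ (A.imp B) → Deriv R Γ (B.imp C) →
      Deriv R Γ (A.imp C)

/-- `Γ ⊢ A` in the natural deduction system with optional rules `R`. -/
def NDer (R : Set NRule) (Γ : Set Fml) (A : Fml) : Prop :=
  Nonempty (Deriv R Γ A)

/-- A derivation may serve as the major premise of an elimination rule in a
normal derivation: it is an assumption or ends with an elimination rule
different from ∨E (i.e. ∧E or →E). -/
def Deriv.MajorOK : ∀ {R : Set NRule} {Γ : Set Fml} {A : Fml}, Deriv R Γ A → Prop
  | _, _, _, .hyp _ _ _ => True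
  | _, _, _, .andE1 _   => True
  | _, _, _, .andE2 _   => True
  | _, _, _, .impE _ _  => True
  | _, _, _, _          => False

/-- A derivation is normal if every major premise of an elimination rule is
either an assumption or the conclusion of an elimination rule different
from ∨E. -/
def Deriv.Normal {R : Set NRule} : ∀ {Γ : Set Fml} {A : Fml}, Deriv R Γ A → Prop
  | _, _, .hyp _ _ _ => True
  | _, _, .andI d e => d.Normal ∧ e.Normal
  | _, _, .andE1 d => d.MajorOK ∧ d.Normal
  | _, _, .andE2 d => d.MajorOK ∧ d.Normal
  | _, _, .orI1 _ d => d.Normal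
  | _, _, .orI2 _ d => d.Normal
  | _, _, .orE d e f => d.MajorOK ∧ d.Normal ∧ e.Normal ∧ f.Normal
  | _, _, .botE _ d => d.Normal
  | _, _, .impI d => d.Normal
  | _, _, .impE d e => e.MajorOK ∧ d.Normal ∧ e.Normal
  | _, _, .impI1 _ d e => d.Normal ∧ e.Normal
  | _, _, .impI2 _ d e => d.Normal ∧ e.Normal
  | _, _, .impIN _ d e f g => d.Normal ∧ e.Normal ∧ f.Normal ∧ g.Normal
  | _, _, .impIN2 _ d e => d.Normal ∧ e.Normal
  | _, _, .impIChat _ _ d => d.Normal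
  | _, _, .impIDhat _ _ d => d.Normal
  | _, _, .impIAnd _ d e => d.Normal ∧ e.Normal
  | _, _, .impIOr _ d e => d.Normal ∧ e.Normal
  | _, _, .impITr _ d e => d.Normal ∧ e.Normal

/-- big conjunction of a list, with ⊤ := ⊥→⊥ for the empty list -/
def bigAnd : List Fml → Fml
  | [] => Fml.bot.imp Fml.bot
  | a :: l => a.and (bigAnd l)

namespace Aux

variable {E : Set ExtAx}

theorem bigAnd_nil_thm : HThm E (bigAnd []) := HThm.ax8 _

theorem proj_append1 (L₁ L₂ : List Fml) :
    HThm E ((bigAnd (L₁ ++ L₂)).imp (bigAnd L₁)) := by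
  induction L₁ with
  | nil => exact HThm.af _ bigAnd_nil_thm
  | cons a t ih =>
      exact HThm.rc (HThm.ax3 _ _) (HThm.tr (HThm.ax4 _ _) ih)

theorem proj_append2 (L₁ L₂ : List Fml) :
    HThm E ((bigAnd (L₁ ++ L₂)).imp (bigAnd L₂)) := by
  induction L₁ with
  | nil => exact HThm.ax8 _
  | cons a t ih => exact HThm.tr (HThm.ax4 _ _) ih

theorem hder_char {Γ : Set Fml} {C : Fml} (h : HDer E Γ C) :
    ∃ L : List Fml, (∀ x ∈ L, x ∈ Γ) ∧ HThm E ((bigAnd L).imp C) := by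
  induction h with
  | hyp hA =>
      exact ⟨[_], by simpa using hA, HThm.ax3 _ _⟩
  | thm hA => exact ⟨[], by simp, HThm.af _ hA⟩
  | conj _ _ ih₁ ih₂ =>
      obtain ⟨L₁, hL₁, h₁⟩ := ih₁
      obtain ⟨L₂, hL₂, h₂⟩ := ih₂
      refine ⟨L₁ ++ L₂, ?_, ?_⟩
      · intro x hx; rcases List.mem_append.mp hx with hx | hx
        · exact hL₁ x hx
        · exact hL₂ x hx
      · exact HThm.rc (HThm.tr (proj_append1 _ _) h₁)
          (HThm.tr (proj_append2 _ _) h₂)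
  | mp _ hAB ih =>
      obtain ⟨L, hL, h₁⟩ := ih
      exact ⟨L, hL, HThm.tr h₁ hAB⟩

theorem der_bigAnd {Γ : Set Fml} {L : List Fml} (hL : ∀ x ∈ L, x ∈ Γ) :
    HDer E Γ (bigAnd L) := by
  induction L with
  | nil => exact HDer.thm bigAnd_nil_thm
  | cons a t ih =>
      exact HDer.conj (HDer.hyp (hL a (by simp)))
        (ih fun x hx => hL x (by simp [hx]))

theorem thm_of_hder_empty {C : Fml} (h : HDer E (∅ : Set Fml) C) : HThm E C := by
  obtain ⟨L, hL, h₁⟩ := hder_char h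
  have : L = [] := by
    cases L with
    | nil => rfl
    | cons a t => exact absurd (hL a (by simp)) (by simp)
  subst this
  exact HThm.mp bigAnd_nil_thm h₁

theorem imp_bigAnd_self {A : Fml} {L : List Fml} (hL : ∀ x ∈ L, x = A) :
    HThm E (A.imp (bigAnd L)) := by
  induction L with
  | nil => exact HThm.af _ bigAnd_nil_thm
  | cons a t ih =>
      have ha : a = A := hL a (by simp)
      subst ha
      exact HThm.rc (HThm.ax8 _) (ih fun x hx => hL x (by simp [hx]))

theorem imp_of_hder_singleton {A B : Fml} (h : HDer E ({A} : Set Fml) B) :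
    HThm E (A.imp B) := by
  obtain ⟨L, hL, h₁⟩ := hder_char h
  exact HThm.tr (imp_bigAnd_self fun x hx => hL x hx) h₁

theorem extract {A : Fml} {Γ : Set Fml} (L : List Fml)
    (hL : ∀ x ∈ L, x = A ∨ x ∈ Γ) :
    ∃ M : List Fml, (∀ x ∈ M, x ∈ Γ) ∧
      HThm E ((A.and (bigAnd M)).imp (bigAnd L)) := by
  induction L with
  | nil => exact ⟨[], by simp, HThm.af _ bigAnd_nil_thm⟩
  | cons a t ih =>
      obtain ⟨M, hM, hth⟩ := ih fun x hx => hL x (by simp [hx])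
      rcases hL a (by simp) with ha | ha
      · subst ha
        exact ⟨M, hM, HThm.rc (HThm.ax3 _ _) hth⟩
      · refine ⟨a :: M, ?_, ?_⟩
        · intro x hx; rcases List.mem_cons.mp hx with hx | hx
          · subst hx; exact ha
          · exact hM x hx
        · -- A ∧ (a ∧ bigAnd M) → a ∧ bigAnd t
          refine HThm.rc (HThm.tr (HThm.ax4 _ _) (HThm.ax3 _ _)) ?_
          exact HThm.tr
            (HThm.rc (HThm.ax3 _ _) (HThm.tr (HThm.ax4 _ _) (HThm.ax4 _ _)))
            hth

theorem biimp_refl (A : Fml) : HThm E (A.biimp A) :=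
  HThm.conj (HThm.ax8 _) (HThm.ax8 _)

end Aux

theorem natded_to_hilbert_WFC (Γ : Set Fml) (A : Fml)
    (h : NDer {NRule.impI1, NRule.impI2, NRule.impAnd} Γ A) :
    HDer ({ExtAx.C} : Set ExtAx) Γ A := by
  obtain ⟨d⟩ := h
  induction d with
  | hyp Γ A hA => exact HDer.hyp hA
  | andI _ _ ih₁ ih₂ => exact HDer.conj ih₁ ih₂
  | andE1 _ ih => exact HDer.mp ih (HThm.ax3 _ _)
  | andE2 _ ih => exact HDer.mp ih (HThm.ax4 _ _)
  | orI1 B _ ih => exact HDer.mp ih (HThm.ax1 _ _)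
  | orI2 A _ ih => exact HDer.mp ih (HThm.ax2 _ _)
  | @orE Γ A B C _ _ _ ihor ih₁ ih₂ =>
      obtain ⟨L₁, hL₁, h₁⟩ := Aux.hder_char ih₁
      obtain ⟨L₂, hL₂, h₂⟩ := Aux.hder_char ih₂
      obtain ⟨M, hM, hMth⟩ := Aux.extract (Γ := Γ) L₁
        (fun x hx => by simpa using hL₁ x hx)
      obtain ⟨N, hN, hNth⟩ := Aux.extract (Γ := Γ) L₂
        (fun x hx => by simpa using hL₂ x hx)
      set K := bigAnd (M ++ N) with hK
      have hKA : HThm ({ExtAx.C} : Set ExtAx) ((K.and A).imp C) :=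
        HThm.tr (HThm.rc (HThm.ax4 _ _)
          (HThm.tr (HThm.ax3 _ _) (Aux.proj_append1 _ _)))
          (HThm.tr hMth h₁)
      have hKB : HThm ({ExtAx.C} : Set ExtAx) ((K.and B).imp C) :=
        HThm.tr (HThm.rc (HThm.ax4 _ _)
          (HThm.tr (HThm.ax3 _ _) (Aux.proj_append2 _ _)))
          (HThm.tr hNth h₂)
      have hbig : HThm ({ExtAx.C} : Set ExtAx) ((K.and (A.or B)).imp C) :=
        HThm.tr (HThm.ax7 _ _ _) (HThm.rd hKA hKB)
      have hKder : HDer ({ExtAx.C} : Set ExtAx) Γ K := by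
        apply Aux.der_bigAnd
        intro x hx; rcases List.mem_append.mp hx with hx | hx
        · exact hM x hx
        · exact hN x hx
      exact HDer.mp (HDer.conj hKder ihor) hbig
  | botE A _ ih => exact HDer.mp ih (HThm.ax14 _)
  | impI _ ih => exact HDer.thm (Aux.imp_of_hder_singleton ih)
  | impE _ _ ih₁ ih₂ =>
      exact HDer.mp ih₁ (Aux.thm_of_hder_empty ih₂)
  | @impI1 Γ A B D _ _ _ ih₁ ih₂ =>
      have hbd : HThm ({ExtAx.C} : Set ExtAx) (B.biimp D) :=
        HThm.conj (Aux.imp_of_hder_singleton ih₁) (Aux.imp_of_hder_singleton ih₂)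
      have := HThm.re (Aux.biimp_refl (E := ({ExtAx.C} : Set ExtAx)) A) hbd
      exact HDer.thm (HThm.mp this (HThm.ax3 _ _))
  | @impI2 Γ A B D _ _ _ ih₁ ih₂ =>
      have hbd : HThm ({ExtAx.C} : Set ExtAx) (B.biimp D) :=
        HThm.conj (Aux.imp_of_hder_singleton ih₁) (Aux.imp_of_hder_singleton ih₂)
      have := HThm.re hbd (Aux.biimp_refl (E := ({ExtAx.C} : Set ExtAx)) A)
      exact HDer.thm (HThm.mp this (HThm.ax3 _ _))
  | impIN hmem => simp at hmem
  | impIN2 hmem => simp at hmem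
  | impIChat C hmem => simp at hmem
  | impIDhat C hmem => simp at hmem
  | impIAnd _ _ _ ih₁ ih₂ =>
      exact HDer.mp (HDer.conj ih₁ ih₂) (HThm.axC _ _ _ rfl)
  | impIOr hmem => simp at hmem
  | impITr hmem => simp at hmem
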